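/- Let E₀ be the equivalence relation on ℕ → Bool defined by x E₀ y iff {n : x n ≠ y n} is finite, and let μ be the fair-coin Bernoulli product measure on ℕ → Bool. If a set G ⊆ (ℕ → Bool) contains at most one element of each E₀-class, then every μ-measurable subset of G has μ-measure zero (i.e., G has inner measure 0). -/
import Mathlib


open MeasureTheory

/-- If `μ` is the fair-coin Bernoulli product measure on `ℕ → Bool` (characterized by its
values on cylinders) and `G` contains at most one element of each `E₀`-class, then every
`μ`-measurable subset of `G` is `μ`-null. -/
def flipS (s : Finset ℕ) (x : ℕ → Bool) : ℕ → Bool := fun n => if n ∈ s then !x n else x n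

lemma flipS_meas (s : Finset ℕ) : Measurable (flipS s) := by
  apply measurable_pi_iff.2
  intro n
  by_cases h : n ∈ s <;> simp only [flipS, h, if_true, if_false]
  · exact (Measurable.of_discrete (f := Bool.not)).comp (measurable_pi_apply n)
  · exact measurable_pi_apply n

lemma flipS_invol (s : Finset ℕ) (x : ℕ → Bool) : flipS s (flipS s x) = x := by
  funext n; by_cases h : n ∈ s <;> simp [flipS, h]

lemma flipS_preimage_cyl (s t : Finset ℕ) (y : ℕ → Bool) :
    flipS s ⁻¹' {x : ℕ → Bool | ∀ n ∈ t, x n = y n}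
      = {x : ℕ → Bool | ∀ n ∈ t, x n = flipS s y n} := by
  ext x
  simp only [Set.mem_preimage, Set.mem_setOf_eq, flipS]
  constructor <;> intro h n hn <;> have := h n hn <;> by_cases hns : n ∈ s <;>
    simp only [hns, if_true, if_false] at this ⊢ <;>
    first
      | exact this
      | (cases hx : x n <;> cases hy : y n <;> simp_all)

def Cyl : Set (Set (ℕ → Bool)) :=
  {C | ∃ (s : Finset ℕ) (y : ℕ → Bool), C = {x : ℕ → Bool | ∀ n ∈ s, x n = y n}}

lemma cyl_pi : IsPiSystem Cyl := by
  rintro _ ⟨s, y, rfl⟩ _ ⟨t, z, rfl⟩ ⟨w, hw1, hw2⟩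
  refine ⟨s ∪ t, w, ?_⟩
  ext x
  simp only [Set.mem_inter_iff, Set.mem_setOf_eq, Finset.mem_union]
  constructor
  · rintro ⟨h1, h2⟩ n (hn | hn)
    · exact (h1 n hn).trans (hw1 n hn).symm
    · exact (h2 n hn).trans (hw2 n hn).symm
  · intro h
    exact ⟨fun n hn => (h n (Or.inl hn)).trans (hw1 n hn),
           fun n hn => (h n (Or.inr hn)).trans (hw2 n hn)⟩

lemma cyl_meas {C : Set (ℕ → Bool)} (h : C ∈ Cyl) : MeasurableSet C := by
  obtain ⟨s, y, rfl⟩ := h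
  have : {x : ℕ → Bool | ∀ n ∈ s, x n = y n} = ⋂ n ∈ s, {x | x n = y n} := by
    ext x; simp
  rw [this]
  refine MeasurableSet.biInter s.countable_toSet fun n _ => ?_
  have : Measurable (fun x : ℕ → Bool => x n) := measurable_pi_apply n
  exact this (MeasurableSet.singleton (y n))

lemma cyl_generate : (inferInstance : MeasurableSpace (ℕ → Bool)) = MeasurableSpace.generateFrom Cyl := by
  apply le_antisymm
  · refine iSup_le fun n => ?_
    rw [MeasurableSpace.comap_le_iff_le_map]
    intro t _
    show MeasurableSet[MeasurableSpace.generateFrom Cyl] ((fun x : ℕ → Bool => x n) ⁻¹' t)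
    have : (fun x : ℕ → Bool => x n) ⁻¹' t = ⋃ b ∈ t, {x : ℕ → Bool | ∀ m ∈ ({n} : Finset ℕ), x m = (fun _ => b) m} := by
      ext x; simp [Set.mem_preimage]
    rw [this]
    exact MeasurableSet.biUnion t.to_countable fun b _ =>
      MeasurableSpace.measurableSet_generateFrom ⟨{n}, fun _ => b, rfl⟩
  · exact MeasurableSpace.generateFrom_le fun C hC => cyl_meas hC

theorem stmt_6 (μ : Measure (ℕ → Bool)) [IsProbabilityMeasure μ]
    (hμ : ∀ (s : Finset ℕ) (y : ℕ → Bool),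
      μ {x : ℕ → Bool | ∀ n ∈ s, x n = y n} = (1 / 2 : ENNReal) ^ s.card)
    (G : Set (ℕ → Bool))
    (hG : ∀ x ∈ G, ∀ y ∈ G, {n : ℕ | x n ≠ y n}.Finite → x = y) :
    ∀ A ⊆ G, NullMeasurableSet A μ → μ A = 0 := by
  intro A hAG hA
  -- measure preserving
  have hmp : ∀ s : Finset ℕ, MeasurePreserving (flipS s) μ μ := by
    intro s
    refine ⟨flipS_meas s, ?_⟩
    have : IsProbabilityMeasure (μ.map (flipS s)) :=
      Measure.isProbabilityMeasure_map (flipS_meas s).aemeasurable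
    refine ext_of_generate_finite Cyl cyl_generate cyl_pi ?_ (by simp)
    rintro _ ⟨t, y, rfl⟩
    rw [Measure.map_apply (flipS_meas s) (cyl_meas ⟨t, y, rfl⟩), flipS_preimage_cyl,
      hμ t (flipS s y), hμ t y]
  set T : Finset ℕ → Set (ℕ → Bool) := fun s => flipS s ⁻¹' A with hT
  have hTmeas : ∀ s, NullMeasurableSet (T s) μ := fun s =>
    hA.preimage (hmp s).quasiMeasurePreserving
  have hTval : ∀ s, μ (T s) = μ A := fun s => (hmp s).measure_preimage hA
  have hdisj : Pairwise (Function.onFun Disjoint T) := by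
    intro s t hst
    rw [Function.onFun, Set.disjoint_left]
    intro x hxs hxt
    have h1 : flipS s x ∈ G := hAG hxs
    have h2 : flipS t x ∈ G := hAG hxt
    have hfin : {n : ℕ | flipS s x n ≠ flipS t x n}.Finite := by
      apply Set.Finite.subset (s ∪ t : Finset ℕ).finite_toSet
      intro n hn
      simp only [Set.mem_setOf_eq, flipS] at hn
      by_contra hns
      simp only [Finset.coe_union, Set.mem_union, Finset.mem_coe] at hns
      push_neg at hns
      simp [hns.1, hns.2] at hn
    have heq := hG _ h1 _ h2 hfin
    apply hst
    ext n : 1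
    have := congrFun heq n
    simp only [flipS] at this
    by_cases hns : n ∈ s <;> by_cases hnt : n ∈ t <;> simp only [hns, hnt, if_true, if_false] <;>
      first
        | rfl
        | (exfalso; cases hx : x n <;> rw [hx] at this <;> simp_all)
  have hsum : μ (⋃ s : Finset ℕ, T s) = ∑' s : Finset ℕ, μ (T s) :=
    measure_iUnion₀ (fun i j hij => (hdisj hij).aedisjoint) hTmeas
  by_contra hne
  have htop : ∑' _ : Finset ℕ, μ A = ⊤ := ENNReal.tsum_const_eq_top_of_ne_zero hne
  have : μ (⋃ s : Finset ℕ, T s) = ⊤ := by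
    rw [hsum]; simp_rw [hTval]; exact htop
  have hle : μ (⋃ s : Finset ℕ, T s) ≤ 1 := prob_le_one
  rw [this] at hle
  simp at hle
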